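/- arXiv:2501.11173 — 8 statements merged into one kernel-verified Lean document; each statement's English description precedes it below -/
import Mathlib

section
/- Let C be a cap in (Z/2Z)^n with affinely independent subset B of size 8, and let x, y ∈ C \ B be distinct elements with x equal to the sum of elements of T_x ⊆ B and y equal to the sum of elements of T_y ⊆ B, where |T_x| = |T_y| = 7. Then a contradiction follows; i.e., at most one dependent element can be a sum of seven basis elements. -/
/-- A cap: a subset of (Z/2Z)^n containing no quad (four distinct vectors summing to zero). -/
def IsCap {n : ℕ} (C : Set (Fin n → ZMod 2)) : Prop :=
  ∀ a ∈ C, ∀ b ∈ C, ∀ c ∈ C, ∀ d ∈ C,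
    a ≠ b → a ≠ c → a ≠ d → b ≠ c → b ≠ d → c ≠ d → a + b + c + d ≠ 0

/-- Affine independence: no element is the sum of an odd number of other elements. -/
def AffIndep {n : ℕ} (B : Finset (Fin n → ZMod 2)) : Prop :=
  ∀ b ∈ B, ∀ T ⊆ B.erase b, Odd T.card → b ≠ ∑ v ∈ T, v


theorem at_most_one_seven {n : ℕ} (C : Set (Fin n → ZMod 2))
    (hC : IsCap C) (B Tx Ty : Finset (Fin n → ZMod 2)) (hBC : ↑B ⊆ C)
    (hB : AffIndep B) (hBcard : B.card = 8)
    (x y : Fin n → ZMod 2) (hxC : x ∈ C) (hxB : x ∉ B)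
    (hyC : y ∈ C) (hyB : y ∉ B) (hxy : x ≠ y)
    (hTx : Tx ⊆ B) (hTy : Ty ⊆ B)
    (hx : x = ∑ v ∈ Tx, v) (hy : y = ∑ v ∈ Ty, v)
    (hcx : Tx.card = 7) (hcy : Ty.card = 7) :
    False := by
  -- find the missing elements a, b
  have hTxe : ∃ a ∈ B, Tx = B.erase a := by
    have h1 : (B \ Tx).card = 1 := by
      rw [Finset.card_sdiff_of_subset hTx, hBcard, hcx]
    obtain ⟨a, ha⟩ := Finset.card_eq_one.mp h1
    refine ⟨a, ?_, ?_⟩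
    · have : a ∈ B \ Tx := ha ▸ Finset.mem_singleton_self a
      exact (Finset.mem_sdiff.mp this).1
    · apply Finset.eq_of_subset_of_card_le
      · intro v hv
        have haT : a ∉ Tx := by
          have : a ∈ B \ Tx := ha ▸ Finset.mem_singleton_self a
          exact (Finset.mem_sdiff.mp this).2
        exact Finset.mem_erase.mpr ⟨fun h => haT (h ▸ hv), hTx hv⟩
      · have haB : a ∈ B := by
          have : a ∈ B \ Tx := ha ▸ Finset.mem_singleton_self a
          exact (Finset.mem_sdiff.mp this).1
        rw [Finset.card_erase_of_mem haB, hBcard, hcx]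
  have hTye : ∃ b ∈ B, Ty = B.erase b := by
    have h1 : (B \ Ty).card = 1 := by
      rw [Finset.card_sdiff_of_subset hTy, hBcard, hcy]
    obtain ⟨b, hb⟩ := Finset.card_eq_one.mp h1
    refine ⟨b, ?_, ?_⟩
    · have : b ∈ B \ Ty := hb ▸ Finset.mem_singleton_self b
      exact (Finset.mem_sdiff.mp this).1
    · apply Finset.eq_of_subset_of_card_le
      · intro v hv
        have hbT : b ∉ Ty := by
          have : b ∈ B \ Ty := hb ▸ Finset.mem_singleton_self b
          exact (Finset.mem_sdiff.mp this).2
        exact Finset.mem_erase.mpr ⟨fun h => hbT (h ▸ hv), hTy hv⟩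
      · have hbB : b ∈ B := by
          have : b ∈ B \ Ty := hb ▸ Finset.mem_singleton_self b
          exact (Finset.mem_sdiff.mp this).1
        rw [Finset.card_erase_of_mem hbB, hBcard, hcy]
  obtain ⟨a, haB, hTxa⟩ := hTxe
  obtain ⟨b, hbB, hTyb⟩ := hTye
  have hab : a ≠ b := by
    intro h
    apply hxy
    rw [hx, hy, hTxa, hTyb, h]
  have hxa : x + a = ∑ v ∈ B, v := by
    rw [hx, hTxa, add_comm]; exact Finset.add_sum_erase B (fun v => v) haB
  have hyb : y + b = ∑ v ∈ B, v := by
    rw [hy, hTyb, add_comm]; exact Finset.add_sum_erase B (fun v => v) hbB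
  have hsum : x + y + a + b = 0 := by
    have : x + y + a + b = (x + a) + (y + b) := by ring
    rw [this, hxa, hyb]
    funext i
    simp [CharTwo.add_self_eq_zero]
  exact hC x hxC y hyC a (hBC haB) b (hBC hbB) hxy
    (fun h => hxB (h ▸ haB)) (fun h => hxB (h ▸ hbB))
    (fun h => hyB (h ▸ haB)) (fun h => hyB (h ▸ hbB)) hab hsum
end

section
/- Let C be a cap in (Z/2Z)^n, B ⊆ C an affinely independent subset of size 8, and x₁, x₂ ∈ C \ B distinct with x₁ = Σ T₁ and x₂ = Σ T₂ where T₁, T₂ ⊆ B satisfy |T₁| = |T₂| = 5. Then |T₁ ∩ T₂| = 2 or |T₁ ∩ T₂| = 3. -/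
lemma sum_symmDiff_eq {n : ℕ} (s t : Finset (Fin n → ZMod 2)) :
    ∑ v ∈ symmDiff s t, v = ∑ v ∈ s, v + ∑ v ∈ t, v := by
  classical
  have h1 : symmDiff s t ∪ (s ∩ t) = s ∪ t := by
    ext x; simp [Finset.mem_symmDiff]; tauto
  have h2 : Disjoint (symmDiff s t) (s ∩ t) := by
    rw [Finset.disjoint_left]; intro x hx hx'
    simp [Finset.mem_symmDiff] at hx
    simp at hx'
    tauto
  have h3 : ∑ v ∈ symmDiff s t, v + ∑ v ∈ s ∩ t, v = ∑ v ∈ s ∪ t, v := by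
    rw [← Finset.sum_union h2, h1]
  have h4 : ∑ v ∈ s ∪ t, v + ∑ v ∈ s ∩ t, v = ∑ v ∈ s, v + ∑ v ∈ t, v :=
    Finset.sum_union_inter
  have hself : ∀ x : Fin n → ZMod 2, x + x = 0 := by
    intro x; funext i; simp [CharTwo.add_self_eq_zero]
  have := congrArg (· + ∑ v ∈ s ∩ t, v) h3
  rw [add_assoc, hself, add_zero] at this
  rw [this, h4]

theorem five_five_inter_two_or_three {n : ℕ} (C : Set (Fin n → ZMod 2))
    (hC : IsCap C) (B T₁ T₂ : Finset (Fin n → ZMod 2)) (hBC : ↑B ⊆ C)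
    (hB : AffIndep B) (hBcard : B.card = 8)
    (x₁ x₂ : Fin n → ZMod 2) (hx₁C : x₁ ∈ C) (hx₁B : x₁ ∉ B)
    (hx₂C : x₂ ∈ C) (hx₂B : x₂ ∉ B) (hne : x₁ ≠ x₂)
    (hT₁ : T₁ ⊆ B) (hT₂ : T₂ ⊆ B)
    (hs₁ : x₁ = ∑ v ∈ T₁, v) (hs₂ : x₂ = ∑ v ∈ T₂, v)
    (hc₁ : T₁.card = 5) (hc₂ : T₂.card = 5) :
    (T₁ ∩ T₂).card = 2 ∨ (T₁ ∩ T₂).card = 3 := by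
  classical
  set k := (T₁ ∩ T₂).card with hk
  have hunion : (T₁ ∪ T₂).card ≤ 8 := hBcard ▸ Finset.card_le_card (Finset.union_subset hT₁ hT₂)
  have hsum : (T₁ ∪ T₂).card + k = 10 := by
    rw [hk, Finset.card_union_add_card_inter, hc₁, hc₂]
  have hk2 : 2 ≤ k := by omega
  have hk5 : k ≤ 5 := by
    rw [hk, ← hc₁]; exact Finset.card_le_card Finset.inter_subset_left
  -- k ≠ 5
  have hne5 : k ≠ 5 := by
    intro h5
    have : T₁ ∩ T₂ = T₁ := Finset.eq_of_subset_of_card_le Finset.inter_subset_left (by omega)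
    have hsub : T₁ ⊆ T₂ := by rw [← this]; exact Finset.inter_subset_right
    have : T₁ = T₂ := Finset.eq_of_subset_of_card_le hsub (by omega)
    exact hne (by rw [hs₁, hs₂, this])
  -- k ≠ 4
  have hne4 : k ≠ 4 := by
    intro h4
    have hsd : (symmDiff T₁ T₂).card = 2 := by
      have h1 : symmDiff T₁ T₂ ∪ (T₁ ∩ T₂) = T₁ ∪ T₂ := by
        ext x; simp [Finset.mem_symmDiff]; tauto
      have h2 : Disjoint (symmDiff T₁ T₂) (T₁ ∩ T₂) := by
        rw [Finset.disjoint_left]; intro x hx hx'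
        simp [Finset.mem_symmDiff] at hx
        simp at hx'
        tauto
      have h3 := Finset.card_union_of_disjoint h2
      rw [h1] at h3
      omega
    obtain ⟨a, b, hab, hab2⟩ := Finset.card_eq_two.mp hsd
    have hsdsum : ∑ v ∈ symmDiff T₁ T₂, v = x₁ + x₂ := by
      rw [sum_symmDiff_eq, hs₁, hs₂]
    rw [hab2, Finset.sum_pair hab] at hsdsum
    have haB : a ∈ B := by
      have : a ∈ symmDiff T₁ T₂ := by rw [hab2]; simp
      rw [Finset.mem_symmDiff] at this
      rcases this with ⟨h, _⟩ | ⟨h, _⟩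
      exacts [hT₁ h, hT₂ h]
    have hbB : b ∈ B := by
      have : b ∈ symmDiff T₁ T₂ := by rw [hab2]; simp
      rw [Finset.mem_symmDiff] at this
      rcases this with ⟨h, _⟩ | ⟨h, _⟩
      exacts [hT₁ h, hT₂ h]
    have hzero : x₁ + x₂ + a + b = 0 := by
      rw [← hsdsum]
      funext i
      simp only [Pi.add_apply, Pi.zero_apply]
      generalize a i = p
      generalize b i = q
      revert p q
      intro p q; fin_cases p <;> fin_cases q <;> rfl
    exact hC x₁ hx₁C x₂ hx₂C a (hBC haB) b (hBC hbB) hne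
      (fun h => hx₁B (h ▸ haB)) (fun h => hx₁B (h ▸ hbB))
      (fun h => hx₂B (h ▸ haB)) (fun h => hx₂B (h ▸ hbB)) hab hzero
  omega
end

section
/- Let C be a cap in (Z/2Z)^n, B ⊆ C an affinely independent subset of size 8, and x₁, x₂ ∈ C \ B distinct with x₁ = Σ T₁ and x₂ = Σ T₂ where T₁, T₂ ⊆ B satisfy |T₁| = 7 and |T₂| = 5. Then |T₁ ∩ T₂| = 4. -/
theorem seven_five_inter_four {n : ℕ} (C : Set (Fin n → ZMod 2))
    (hC : IsCap C) (B T₁ T₂ : Finset (Fin n → ZMod 2)) (hBC : ↑B ⊆ C)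
    (hB : AffIndep B) (hBcard : B.card = 8)
    (x₁ x₂ : Fin n → ZMod 2) (hx₁C : x₁ ∈ C) (hx₁B : x₁ ∉ B)
    (hx₂C : x₂ ∈ C) (hx₂B : x₂ ∉ B) (hne : x₁ ≠ x₂)
    (hT₁ : T₁ ⊆ B) (hT₂ : T₂ ⊆ B)
    (hs₁ : x₁ = ∑ v ∈ T₁, v) (hs₂ : x₂ = ∑ v ∈ T₂, v)
    (hc₁ : T₁.card = 7) (hc₂ : T₂.card = 5) :
    (T₁ ∩ T₂).card = 4 := by
  have hle : (T₁ ∩ T₂).card ≤ 5 := by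
    rw [← hc₂]; exact Finset.card_le_card Finset.inter_subset_right
  have hunion : (T₁ ∪ T₂).card ≤ 8 := by
    rw [← hBcard]; exact Finset.card_le_card (Finset.union_subset hT₁ hT₂)
  have hiu := Finset.card_union_add_card_inter T₁ T₂
  have hge : 4 ≤ (T₁ ∩ T₂).card := by omega
  have hne5 : (T₁ ∩ T₂).card ≠ 5 := by
    intro h5
    have hsub : T₂ ⊆ T₁ := by
      have : T₁ ∩ T₂ = T₂ :=
        Finset.eq_of_subset_of_card_le Finset.inter_subset_right (by omega)
      intro x hx
      exact Finset.mem_of_mem_inter_left (this ▸ hx)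
    have hDcard : (T₁ \ T₂).card = 2 := by
      rw [Finset.card_sdiff_of_subset hsub]; omega
    obtain ⟨a, b, hab, hD⟩ := Finset.card_eq_two.mp hDcard
    have haB : a ∈ B := hT₁ (Finset.sdiff_subset (hD ▸ Finset.mem_insert_self a {b}))
    have hbB : b ∈ B := hT₁ (Finset.sdiff_subset (hD ▸ Finset.mem_insert_of_mem (Finset.mem_singleton_self b)))
    have hsum : x₁ = a + b + x₂ := by
      rw [hs₁, hs₂, ← Finset.sum_sdiff hsub, hD]
      rw [Finset.sum_insert (by simpa using hab), Finset.sum_singleton]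
    have hzero : x₁ + x₂ + a + b = 0 := by
      rw [hsum]; funext i
      simp only [Pi.add_apply, Pi.zero_apply]
      linear_combination (CharTwo.add_self_eq_zero (a i)) +
        (CharTwo.add_self_eq_zero (b i)) + (CharTwo.add_self_eq_zero (x₂ i))
    exact hC x₁ hx₁C x₂ hx₂C a (hBC haB) b (hBC hbB) hne
      (fun h => hx₁B (h ▸ haB)) (fun h => hx₁B (h ▸ hbB))
      (fun h => hx₂B (h ▸ haB)) (fun h => hx₂B (h ▸ hbB)) hab hzero
  omega
end

section
/- Let B = {a₁, ..., a₈} be an affinely independent set in (Z/2Z)^n, and let x₁ = a₁+a₂+a₃+a₄+a₅ and x₂ = a₄+a₅+a₆+a₇+a₈. Then C = B ∪ {x₁, x₂} is a cap of size 10. -/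
open scoped symmDiff

def tenSets : Finset (Finset (Fin 8)) :=
  {{0}, {1}, {2}, {3}, {4}, {5}, {6}, {7}, {0,1,2,3,4}, {3,4,5,6,7}}

def tenMasks : List ℕ := [1,2,4,8,16,32,64,128,31,248]

/-! ### Nat bitmask infrastructure -/

def mask (S : Finset (Fin 8)) : ℕ := ∑ i ∈ S, 2 ^ (i : ℕ)

lemma mask_lt_of (S : Finset (Fin 8)) (m : ℕ) (h : ∀ i ∈ S, (i : ℕ) < m) : mask S < 2 ^ m := by
  have : mask S = ∑ k ∈ S.image (fun i : Fin 8 => (i : ℕ)), 2 ^ k := by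
    rw [Finset.sum_image (fun x _ y _ h => Fin.val_injective h)]
    rfl
  rw [this]
  exact Nat.geomSum_lt le_rfl (by simpa using h)

lemma mask_testBit (S : Finset (Fin 8)) (j : Fin 8) :
    (mask S).testBit (j : ℕ) = decide (j ∈ S) := by
  induction S using Finset.induction_on_max with
  | empty => simp [mask]
  | insert a S ha ih =>
    have haS : a ∉ S := fun h => absurd (ha a h) (lt_irrefl a)
    have hm : mask (insert a S) = 2 ^ (a : ℕ) + mask S := Finset.sum_insert haS
    have hlt : mask S < 2 ^ (a : ℕ) := mask_lt_of S _ (fun i hi => ha i hi)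
    rcases lt_trichotomy (j : ℕ) (a : ℕ) with h | h | h
    · rw [hm, Nat.testBit_two_pow_add_gt h, ih]
      have : j ≠ a := fun hja => by simp [hja] at h
      simp [Finset.mem_insert, this]
    · have hja : j = a := Fin.val_injective h
      rw [hm, hja, Nat.testBit_two_pow_add_eq,
        Nat.testBit_lt_two_pow hlt]
      simp
    · have h1 : mask (insert a S) < 2 ^ (j : ℕ) := by
        rw [hm]
        calc 2 ^ (a : ℕ) + mask S < 2 ^ (a : ℕ) + 2 ^ (a : ℕ) := by omega
          _ = 2 ^ ((a : ℕ) + 1) := by ring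
          _ ≤ 2 ^ (j : ℕ) := Nat.pow_le_pow_right (by norm_num) (by omega)
      rw [Nat.testBit_lt_two_pow h1]
      have hj : j ∉ insert a S := by
        intro hj
        rcases Finset.mem_insert.1 hj with rfl | hjS
        · exact lt_irrefl _ h
        · exact absurd (ha j hjS) (by intro hh; have := Fin.lt_iff_val_lt_val.1 hh; omega)
      simp [hj]

lemma mask_lt (S : Finset (Fin 8)) : mask S < 2 ^ 8 :=
  mask_lt_of S 8 (fun i _ => i.isLt)

lemma mask_xor (S T : Finset (Fin 8)) : mask (S ∆ T) = mask S ^^^ mask T := by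
  apply Nat.eq_of_testBit_eq
  intro k
  rw [Nat.testBit_xor]
  by_cases hk : k < 8
  · have : k = ((⟨k, hk⟩ : Fin 8) : ℕ) := rfl
    rw [this, mask_testBit, mask_testBit, mask_testBit]
    by_cases hS : (⟨k, hk⟩ : Fin 8) ∈ S <;> by_cases hT : (⟨k, hk⟩ : Fin 8) ∈ T <;>
      simp [Finset.mem_symmDiff, hS, hT]
  · have h8 : (2:ℕ) ^ 8 ≤ 2 ^ k := Nat.pow_le_pow_right (by norm_num) (by omega)
    rw [Nat.testBit_lt_two_pow (lt_of_lt_of_le (mask_lt _) h8),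
      Nat.testBit_lt_two_pow (lt_of_lt_of_le (mask_lt _) h8),
      Nat.testBit_lt_two_pow (lt_of_lt_of_le (mask_lt _) h8)]
    rfl

lemma mask_empty_iff (S : Finset (Fin 8)) : mask S = 0 ↔ S = ∅ := by
  constructor
  · intro h
    by_contra hne
    obtain ⟨i, hi⟩ := Finset.nonempty_iff_ne_empty.2 hne
    have := mask_testBit S i
    rw [h, Nat.zero_testBit] at this
    simp [hi] at this
  · rintro rfl; simp [mask]

/-! ### decidable facts -/

set_option maxRecDepth 10000 in
lemma masks_quads : ∀ x ∈ tenMasks, ∀ y ∈ tenMasks, ∀ z ∈ tenMasks, ∀ w ∈ tenMasks,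
    x ≠ y → x ≠ z → x ≠ w → y ≠ z → y ≠ w → z ≠ w → x ^^^ y ^^^ z ^^^ w ≠ 0 := by decide

set_option maxRecDepth 10000 in
lemma mask_mem : ∀ S ∈ tenSets, mask S ∈ tenMasks := by decide

set_option maxRecDepth 10000 in
lemma mask_inj : ∀ S ∈ tenSets, ∀ T ∈ tenSets, S ≠ T → mask S ≠ mask T := by decide

set_option maxRecDepth 10000 in
lemma ten_odd : ∀ S ∈ tenSets, Odd S.card := by decide

/-! ### generic lemmas -/

lemma two_self {n : ℕ} (x : Fin n → ZMod 2) : x + x = 0 := by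
  funext i
  exact CharTwo.add_self_eq_zero _

lemma key {n : ℕ} (a : Fin 8 → (Fin n → ZMod 2)) (ha : Function.Injective a)
    (hB : AffIndep (Finset.image a Finset.univ))
    (D : Finset (Fin 8)) (hD : D.Nonempty) (hEv : Even D.card) :
    ∑ i ∈ D, a i ≠ 0 := by
  intro h0
  obtain ⟨b, hb⟩ := hD
  have hsub : Finset.image a (D.erase b) ⊆ (Finset.image a Finset.univ).erase (a b) := by
    intro x hx
    simp only [Finset.mem_image] at hx
    obtain ⟨i, hi, rfl⟩ := hx
    exact Finset.mem_erase.2 ⟨fun h => (Finset.mem_erase.1 hi).1 (ha h),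
      Finset.mem_image_of_mem a (Finset.mem_univ i)⟩
  have hpos : 1 ≤ D.card := Finset.card_pos.2 ⟨b, hb⟩
  have hcard : (Finset.image a (D.erase b)).card = D.card - 1 := by
    rw [Finset.card_image_of_injective _ ha, Finset.card_erase_of_mem hb]
  have hodd : Odd (Finset.image a (D.erase b)).card := by
    rw [hcard]
    obtain ⟨k, hk⟩ := hEv
    exact ⟨k - 1, by omega⟩
  have hsum : ∑ v ∈ Finset.image a (D.erase b), v = ∑ i ∈ D.erase b, a i :=
    Finset.sum_image (fun x _ y _ h => ha h)
  have hadd : a b + ∑ i ∈ D.erase b, a i = 0 := by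
    rw [Finset.add_sum_erase D a hb]; exact h0
  have heq : a b = ∑ i ∈ D.erase b, a i := by
    calc a b = a b + (∑ i ∈ D.erase b, a i + ∑ i ∈ D.erase b, a i) := by
          rw [two_self, add_zero]
      _ = (a b + ∑ i ∈ D.erase b, a i) + ∑ i ∈ D.erase b, a i := by rw [add_assoc]
      _ = ∑ i ∈ D.erase b, a i := by rw [hadd, zero_add]
  exact hB (a b) (Finset.mem_image_of_mem a (Finset.mem_univ b)) _ hsub hodd (by rw [hsum]; exact heq)

lemma sum_sd {n : ℕ} (a : Fin 8 → (Fin n → ZMod 2)) (S T : Finset (Fin 8)) :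
    (∑ i ∈ S, a i) + (∑ i ∈ T, a i) = ∑ i ∈ S ∆ T, a i := by
  have hS := Finset.sum_sdiff (f := a) (Finset.inter_subset_left : S ∩ T ⊆ S)
  rw [Finset.sdiff_inter_self_left] at hS
  have hT := Finset.sum_sdiff (f := a) (Finset.inter_subset_right : S ∩ T ⊆ T)
  rw [Finset.sdiff_inter_self_right] at hT
  have hsd : ∑ i ∈ S ∆ T, a i = ∑ i ∈ S \ T, a i + ∑ i ∈ T \ S, a i := by
    rw [symmDiff_def, Finset.sup_eq_union, Finset.sum_union disjoint_sdiff_sdiff]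
  rw [← hS, ← hT, hsd, add_add_add_comm, two_self, add_zero]

lemma card_sd (S T : Finset (Fin 8)) :
    (S ∆ T).card + 2 * (S ∩ T).card = S.card + T.card := by
  have h1 := Finset.card_sdiff_add_card_inter S T
  have h2 := Finset.card_sdiff_add_card_inter T S
  have h3 : (T ∩ S).card = (S ∩ T).card := by rw [Finset.inter_comm]
  have h4 : (S ∆ T).card = (S \ T).card + (T \ S).card := by
    rw [symmDiff_def, Finset.sup_eq_union, Finset.card_union_of_disjoint disjoint_sdiff_sdiff]
  omega

lemma ten_pairs : ∀ S ∈ tenSets, ∀ T ∈ tenSets, S ≠ T →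
    (S ∆ T).Nonempty ∧ Even (S ∆ T).card := by
  intro S hS T hT hne
  constructor
  · rw [Finset.nonempty_iff_ne_empty]
    intro hD
    have hm : mask (S ∆ T) = 0 := (mask_empty_iff _).2 hD
    rw [mask_xor] at hm
    exact mask_inj S hS T hT hne (xor_eq_zero_iff.1 hm)
  · have o1 := ten_odd S hS
    have o2 := ten_odd T hT
    have e1 := card_sd S T
    rw [Nat.odd_iff] at o1 o2
    rw [Nat.even_iff]
    omega

lemma ten_quads : ∀ S1 ∈ tenSets, ∀ S2 ∈ tenSets, ∀ S3 ∈ tenSets, ∀ S4 ∈ tenSets,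
    S1 ≠ S2 → S1 ≠ S3 → S1 ≠ S4 → S2 ≠ S3 → S2 ≠ S4 → S3 ≠ S4 →
    (S1 ∆ S2 ∆ S3 ∆ S4).Nonempty ∧ Even (S1 ∆ S2 ∆ S3 ∆ S4).card := by
  intro S1 h1 S2 h2 S3 h3 S4 h4 h12 h13 h14 h23 h24 h34
  constructor
  · rw [Finset.nonempty_iff_ne_empty]
    intro hD
    have hm : mask (S1 ∆ S2 ∆ S3 ∆ S4) = 0 := (mask_empty_iff _).2 hD
    rw [mask_xor, mask_xor, mask_xor] at hm
    exact masks_quads _ (mask_mem _ h1) _ (mask_mem _ h2) _ (mask_mem _ h3) _ (mask_mem _ h4)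
      (mask_inj _ h1 _ h2 h12) (mask_inj _ h1 _ h3 h13) (mask_inj _ h1 _ h4 h14)
      (mask_inj _ h2 _ h3 h23) (mask_inj _ h2 _ h4 h24) (mask_inj _ h3 _ h4 h34) hm
  · have o1 := ten_odd S1 h1
    have o2 := ten_odd S2 h2
    have o3 := ten_odd S3 h3
    have o4 := ten_odd S4 h4
    have e1 := card_sd S1 S2
    have e2 := card_sd (S1 ∆ S2) S3
    have e3 := card_sd (S1 ∆ S2 ∆ S3) S4
    rw [Nat.odd_iff] at o1 o2 o3 o4
    rw [Nat.even_iff]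
    omega

set_option maxRecDepth 10000 in
theorem cap10_552 {n : ℕ} (a : Fin 8 → (Fin n → ZMod 2))
    (ha : Function.Injective a)
    (hB : AffIndep (Finset.image a Finset.univ)) :
    IsCap (↑(Finset.image a Finset.univ ∪
        {a 0 + a 1 + a 2 + a 3 + a 4, a 3 + a 4 + a 5 + a 6 + a 7}) :
      Set (Fin n → ZMod 2)) ∧
    (Finset.image a Finset.univ ∪
        {a 0 + a 1 + a 2 + a 3 + a 4, a 3 + a 4 + a 5 + a 6 + a 7}).card = 10 := by
  set f : Finset (Fin 8) → (Fin n → ZMod 2) := fun S => ∑ i ∈ S, a i with hf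
  have hx1 : a 0 + a 1 + a 2 + a 3 + a 4 = f {0,1,2,3,4} := by
    simp [hf, Finset.sum_insert, Finset.mem_insert, add_assoc]
  have hx2 : a 3 + a 4 + a 5 + a 6 + a 7 = f {3,4,5,6,7} := by
    simp [hf, Finset.sum_insert, Finset.mem_insert, add_assoc]
  have hai : ∀ i : Fin 8, a i = f {i} := fun i => (Finset.sum_singleton _ i).symm
  have hsingle : ∀ i : Fin 8, ({i} : Finset (Fin 8)) ∈ tenSets := by decide
  have hfne : ∀ S ∈ tenSets, ∀ T ∈ tenSets, S ≠ T → f S ≠ f T := by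
    intro S hS T hT hST hEq
    obtain ⟨hne, hev⟩ := ten_pairs S hS T hT hST
    apply key a ha hB _ hne hev
    rw [← sum_sd a S T]
    show f S + f T = 0
    rw [hEq, two_self]
  have hmem : ∀ c ∈ (↑(Finset.image a Finset.univ ∪
        {a 0 + a 1 + a 2 + a 3 + a 4, a 3 + a 4 + a 5 + a 6 + a 7}) :
      Set (Fin n → ZMod 2)), ∃ S ∈ tenSets, c = f S := by
    intro c hc
    simp only [Finset.coe_union, Set.mem_union, Finset.mem_coe, Finset.mem_image,
      Finset.mem_insert, Finset.mem_singleton, Finset.coe_insert, Set.mem_insert_iff,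
      Finset.coe_singleton, Set.mem_singleton_iff, Finset.mem_univ, true_and] at hc
    rcases hc with ⟨i, rfl⟩ | rfl | rfl
    · exact ⟨{i}, hsingle i, hai i⟩
    · exact ⟨{0,1,2,3,4}, by decide, hx1⟩
    · exact ⟨{3,4,5,6,7}, by decide, hx2⟩
  constructor
  · intro p hp q hq r hr s hs hpq hpr hps hqr hqs hrs h0
    obtain ⟨S1, hS1, rfl⟩ := hmem p hp
    obtain ⟨S2, hS2, rfl⟩ := hmem q hq
    obtain ⟨S3, hS3, rfl⟩ := hmem r hr
    obtain ⟨S4, hS4, rfl⟩ := hmem s hs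
    have h12 : S1 ≠ S2 := fun h => hpq (by rw [h])
    have h13 : S1 ≠ S3 := fun h => hpr (by rw [h])
    have h14 : S1 ≠ S4 := fun h => hps (by rw [h])
    have h23 : S2 ≠ S3 := fun h => hqr (by rw [h])
    have h24 : S2 ≠ S4 := fun h => hqs (by rw [h])
    have h34 : S3 ≠ S4 := fun h => hrs (by rw [h])
    obtain ⟨hne, hev⟩ := ten_quads S1 hS1 S2 hS2 S3 hS3 S4 hS4 h12 h13 h14 h23 h24 h34
    apply key a ha hB _ hne hev
    rw [← sum_sd a, ← sum_sd a, ← sum_sd a]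
    exact h0
  · have hx1B : a 0 + a 1 + a 2 + a 3 + a 4 ∉ Finset.image a Finset.univ := by
      rw [hx1]
      simp only [Finset.mem_image, Finset.mem_univ, true_and]
      rintro ⟨i, hi⟩
      have hne : ({i} : Finset (Fin 8)) ≠ {0,1,2,3,4} := by fin_cases i <;> decide
      exact hfne {i} (hsingle i) {0,1,2,3,4} (by decide) hne (by rw [← hai i, hi])
    have hx2B : a 3 + a 4 + a 5 + a 6 + a 7 ∉ Finset.image a Finset.univ := by
      rw [hx2]
      simp only [Finset.mem_image, Finset.mem_univ, true_and]
      rintro ⟨i, hi⟩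
      have hne : ({i} : Finset (Fin 8)) ≠ {3,4,5,6,7} := by fin_cases i <;> decide
      exact hfne {i} (hsingle i) {3,4,5,6,7} (by decide) hne (by rw [← hai i, hi])
    have hx12 : (a 0 + a 1 + a 2 + a 3 + a 4) ≠ (a 3 + a 4 + a 5 + a 6 + a 7) := by
      rw [hx1, hx2]
      exact hfne {0,1,2,3,4} (by decide) {3,4,5,6,7} (by decide) (by decide)
    rw [Finset.card_union_of_disjoint]
    · rw [Finset.card_image_of_injective _ ha, Finset.card_insert_of_notMem
        (by simpa using hx12), Finset.card_singleton]
      simp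
    · simp only [Finset.disjoint_insert_right, Finset.disjoint_singleton_right]
      exact ⟨hx1B, hx2B⟩
end

section
/- Let B = {a₁, ..., a₈} be an affinely independent set in (Z/2Z)^n, and let x₁ = a₁+a₂+a₃+a₄+a₅ and x₂ = a₃+a₄+a₅+a₆+a₇. Then C = B ∪ {x₁, x₂} is a cap of size 10. -/
set_option maxRecDepth 100000
set_option maxHeartbeats 2000000

open Finset

private def V : Fin 10 → (Fin 8 → ZMod 2) :=
  ![![1,0,0,0,0,0,0,0], ![0,1,0,0,0,0,0,0], ![0,0,1,0,0,0,0,0], ![0,0,0,1,0,0,0,0],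
    ![0,0,0,0,1,0,0,0], ![0,0,0,0,0,1,0,0], ![0,0,0,0,0,0,1,0], ![0,0,0,0,0,0,0,1],
    ![1,1,1,1,1,0,0,0], ![0,0,1,1,1,1,1,0]]

private lemma V_par : ∀ i, ∑ j, V i j = 1 := by decide

private lemma V_noquad : ∀ i j k l : Fin 10, i ≠ j → i ≠ k → i ≠ l → j ≠ k → j ≠ l → k ≠ l →
    V i + V j + V k + V l ≠ 0 := by decide

private lemma zmod2_cases (x : ZMod 2) : x = 0 ∨ x = 1 := by revert x; decide

private lemma zmod2_add_eq_zero {x y : ZMod 2} (h : x + y = 0) : x = y := by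
  rcases zmod2_cases x with h1 | h1 <;> rcases zmod2_cases y with h2 | h2 <;> simp_all

private lemma ker_lemma {n : ℕ} (a : Fin 8 → (Fin n → ZMod 2)) (ha : Function.Injective a)
    (hB : AffIndep (Finset.image a Finset.univ)) (c : Fin 8 → ZMod 2)
    (hpar : ∑ i, c i = 0) (hφ : ∑ i, c i • a i = 0) : c = 0 := by
  by_contra hc
  set S : Finset (Fin 8) := univ.filter (fun i => c i = 1) with hS
  have hmem : ∀ i, i ∈ S ↔ c i = 1 := by intro i; simp [hS]
  have hzero : ∀ i, i ∉ S → c i = 0 := by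
    intro i hi
    rcases zmod2_cases (c i) with h | h
    · exact h
    · exact absurd ((hmem i).2 h) hi
  have hSne : S.Nonempty := by
    rcases Function.ne_iff.1 hc with ⟨i, hi⟩
    rcases zmod2_cases (c i) with h | h
    · exact absurd h hi
    · exact ⟨i, (hmem i).2 h⟩
  have h1 : ∑ i ∈ S, a i = 0 := by
    calc ∑ i ∈ S, a i = ∑ i ∈ S, c i • a i :=
          sum_congr rfl (fun i hi => by rw [(hmem i).1 hi, one_smul])
      _ = ∑ i, c i • a i :=
          Finset.sum_subset (subset_univ S) (fun i _ hi => by rw [hzero i hi, zero_smul])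
      _ = 0 := hφ
  have h2 : (S.card : ZMod 2) = 0 := by
    have h : ∑ i ∈ S, c i = ∑ i, c i :=
      Finset.sum_subset (subset_univ S) (fun i _ hi => hzero i hi)
    have h3 : ∑ i ∈ S, c i = (S.card : ZMod 2) := by
      rw [Finset.sum_congr rfl (fun i hi => (hmem i).1 hi)]
      simp
    rw [← h3, h, hpar]
  have heven : Even S.card := by
    have := (ZMod.natCast_eq_zero_iff S.card 2).1 h2
    exact (even_iff_two_dvd).2 this
  obtain ⟨i₀, hi₀⟩ := hSne
  set T : Finset (Fin n → ZMod 2) := (S.erase i₀).image a with hT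
  have hTsub : T ⊆ (Finset.image a Finset.univ).erase (a i₀) := by
    intro x hx
    rcases Finset.mem_image.1 hx with ⟨j, hj, rfl⟩
    exact Finset.mem_erase.2 ⟨fun h => (Finset.mem_erase.1 hj).1 (ha h),
      Finset.mem_image_of_mem a (mem_univ j)⟩
  have hTcard : T.card = S.card - 1 := by
    rw [hT, Finset.card_image_of_injective _ ha, Finset.card_erase_of_mem hi₀]
  have hodd : Odd T.card := by
    rw [hTcard]
    exact Nat.Even.sub_odd (Finset.card_pos.2 ⟨i₀, hi₀⟩) heven odd_one
  have hsumT : ∑ v ∈ T, v = ∑ j ∈ S.erase i₀, a j := by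
    rw [hT]
    exact Finset.sum_image (fun x _ y _ h => ha h)
  have hkey : a i₀ = ∑ v ∈ T, v := by
    rw [hsumT]
    have h4 : a i₀ + ∑ j ∈ S.erase i₀, a j = 0 := by
      rw [Finset.add_sum_erase S a hi₀]; exact h1
    exact funext fun m => zmod2_add_eq_zero (congrFun h4 m)
  exact hB (a i₀) (Finset.mem_image_of_mem a (mem_univ i₀)) T hTsub hodd hkey

private lemma V_inj : Function.Injective V := by decide

private lemma zmod2_add_self (x : ZMod 2) : x + x = 0 := by revert x; decide

private lemma phi_inj {n : ℕ} (a : Fin 8 → (Fin n → ZMod 2)) (ha : Function.Injective a)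
    (hB : AffIndep (Finset.image a Finset.univ)) {i i' : Fin 10}
    (h : ∑ j, V i j • a j = ∑ j, V i' j • a j) : i = i' := by
  have hker : (fun j => V i j + V i' j) = 0 := by
    apply ker_lemma a ha hB
    · rw [Finset.sum_add_distrib, V_par, V_par]
      decide
    · have e1 : ∑ j, (V i j + V i' j) • a j = (∑ j, V i j • a j) + ∑ j, V i' j • a j := by
        rw [← Finset.sum_add_distrib]
        exact Finset.sum_congr rfl (fun j _ => add_smul _ _ _)
      rw [e1, h]
      exact funext fun m => zmod2_add_self _
  exact V_inj (funext fun j => zmod2_add_eq_zero (congrFun hker j))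

private lemma vec8_5 {α : Type*} (x0 x1 x2 x3 x4 x5 x6 x7 : α) :
    ![x0,x1,x2,x3,x4,x5,x6,x7] 5 = x5 := rfl
private lemma vec8_6 {α : Type*} (x0 x1 x2 x3 x4 x5 x6 x7 : α) :
    ![x0,x1,x2,x3,x4,x5,x6,x7] 6 = x6 := rfl
private lemma vec8_7 {α : Type*} (x0 x1 x2 x3 x4 x5 x6 x7 : α) :
    ![x0,x1,x2,x3,x4,x5,x6,x7] 7 = x7 := rfl

theorem cap10_553 {n : ℕ} (a : Fin 8 → (Fin n → ZMod 2))
    (ha : Function.Injective a)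
    (hB : AffIndep (Finset.image a Finset.univ)) :
    IsCap (↑(Finset.image a Finset.univ ∪
        {a 0 + a 1 + a 2 + a 3 + a 4, a 2 + a 3 + a 4 + a 5 + a 6}) :
      Set (Fin n → ZMod 2)) ∧
    (Finset.image a Finset.univ ∪
        {a 0 + a 1 + a 2 + a 3 + a 4, a 2 + a 3 + a 4 + a 5 + a 6}).card = 10 := by
  have h8 : ∀ i : Fin 8, ∑ j, V (Fin.castLE (by norm_num) i) j • a j = a i := by
    intro i
    have hrow : ∀ j, V (Fin.castLE (by norm_num : (8:ℕ) ≤ 10) i) j = if j = i then 1 else 0 := by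
      revert i; decide
    calc ∑ j, V (Fin.castLE (by norm_num) i) j • a j
        = ∑ j, (if j = i then a j else 0) := by
          refine Finset.sum_congr rfl fun j _ => ?_
          rw [hrow j]
          split <;> simp
      _ = a i := by simp
  have hv1 : ∑ j, V 8 j • a j = a 0 + a 1 + a 2 + a 3 + a 4 := by
    rw [Fin.sum_univ_eight]
    simp only [show V 8 0 = 1 by decide, show V 8 1 = 1 by decide, show V 8 2 = 1 by decide,
      show V 8 3 = 1 by decide, show V 8 4 = 1 by decide, show V 8 5 = 0 by decide,
      show V 8 6 = 0 by decide, show V 8 7 = 0 by decide, one_smul, zero_smul, add_zero, zero_add]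
  have hv2 : ∑ j, V 9 j • a j = a 2 + a 3 + a 4 + a 5 + a 6 := by
    rw [Fin.sum_univ_eight]
    simp only [show V 9 0 = 0 by decide, show V 9 1 = 0 by decide, show V 9 2 = 1 by decide,
      show V 9 3 = 1 by decide, show V 9 4 = 1 by decide, show V 9 5 = 1 by decide,
      show V 9 6 = 1 by decide, show V 9 7 = 0 by decide, one_smul, zero_smul, add_zero, zero_add]
  have key : ∀ i i' : Fin 10, (∑ j, V i j • a j) = (∑ j, V i' j • a j) → i = i' :=
    fun i i' h => phi_inj a ha hB h
  have hrep : ∀ w ∈ ((Finset.image a Finset.univ ∪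
        {a 0 + a 1 + a 2 + a 3 + a 4, a 2 + a 3 + a 4 + a 5 + a 6} : Finset _) :
        Set (Fin n → ZMod 2)), ∃ i : Fin 10, w = ∑ j, V i j • a j := by
    intro w hw
    simp only [Finset.coe_union, Set.mem_union, Finset.mem_coe, Finset.mem_image,
      Finset.mem_univ, true_and, Finset.mem_insert, Finset.mem_singleton] at hw
    rcases hw with ⟨i, rfl⟩ | h | h
    · exact ⟨Fin.castLE (by norm_num) i, (h8 i).symm⟩
    · exact ⟨8, by rw [hv1, h]⟩
    · exact ⟨9, by rw [hv2, h]⟩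
  constructor
  · intro w1 h1 w2 h2 w3 h3 w4 h4 n12 n13 n14 n23 n24 n34 hsum
    obtain ⟨i1, rfl⟩ := hrep w1 h1
    obtain ⟨i2, rfl⟩ := hrep w2 h2
    obtain ⟨i3, rfl⟩ := hrep w3 h3
    obtain ⟨i4, rfl⟩ := hrep w4 h4
    have d12 : i1 ≠ i2 := fun h => n12 (by rw [h])
    have d13 : i1 ≠ i3 := fun h => n13 (by rw [h])
    have d14 : i1 ≠ i4 := fun h => n14 (by rw [h])
    have d23 : i2 ≠ i3 := fun h => n23 (by rw [h])
    have d24 : i2 ≠ i4 := fun h => n24 (by rw [h])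
    have d34 : i3 ≠ i4 := fun h => n34 (by rw [h])
    have hc : (fun j => V i1 j + V i2 j + V i3 j + V i4 j) = 0 := by
      apply ker_lemma a ha hB
      · simp only [Finset.sum_add_distrib, V_par]
        decide
      · simp only [add_smul, Finset.sum_add_distrib]
        exact hsum
    exact V_noquad i1 i2 i3 i4 d12 d13 d14 d23 d24 d34 hc
  · have hx1 : (a 0 + a 1 + a 2 + a 3 + a 4) ∉ Finset.image a Finset.univ := by
      simp only [Finset.mem_image, Finset.mem_univ, true_and]
      rintro ⟨i, hi⟩
      have h := key (Fin.castLE (by norm_num) i) 8 (by rw [h8 i, hv1]; exact hi)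
      have hv := congrArg Fin.val h
      have := i.isLt
      simp [Fin.castLE] at hv
      omega
    have hx2 : (a 2 + a 3 + a 4 + a 5 + a 6) ∉ Finset.image a Finset.univ := by
      simp only [Finset.mem_image, Finset.mem_univ, true_and]
      rintro ⟨i, hi⟩
      have h := key (Fin.castLE (by norm_num) i) 9 (by rw [h8 i, hv2]; exact hi)
      have hv := congrArg Fin.val h
      have := i.isLt
      simp [Fin.castLE] at hv
      omega
    have hx12 : (a 0 + a 1 + a 2 + a 3 + a 4) ≠ (a 2 + a 3 + a 4 + a 5 + a 6) := by
      intro h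
      have := key 8 9 (by rw [hv1, hv2]; exact h)
      exact absurd this (by decide)
    have hdisj : Disjoint (Finset.image a Finset.univ)
        ({a 0 + a 1 + a 2 + a 3 + a 4, a 2 + a 3 + a 4 + a 5 + a 6} : Finset _) := by
      rw [Finset.disjoint_right]
      intro w hw
      rcases Finset.mem_insert.1 hw with rfl | hw'
      · exact hx1
      · rw [Finset.mem_singleton.1 hw']
        exact hx2
    rw [Finset.card_union_of_disjoint hdisj, Finset.card_image_of_injective _ ha,
      Finset.card_insert_of_notMem (by simpa using hx12), Finset.card_singleton]
    simp
end

section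
/- Let B = {a₁, ..., a₈} be an affinely independent set in (Z/2Z)^n. The cap C = B ∪ {a₁+a₂+a₃+a₄+a₅, a₄+a₅+a₆+a₇+a₈} is not affinely equivalent to the cap C' = B ∪ {a₁+a₂+a₃+a₄+a₅, a₃+a₄+a₅+a₆+a₇}. -/
/-- Affine equivalence of subsets of (Z/2Z)^n: an invertible affine map sends one onto the other. -/
def AffEquiv {n : ℕ} (S S' : Set (Fin n → ZMod 2)) : Prop :=
  ∃ (L : (Fin n → ZMod 2) ≃ₗ[ZMod 2] (Fin n → ZMod 2)) (b : Fin n → ZMod 2),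
    (fun x => L x + b) '' S = S'

variable {n : ℕ}

/-- The sum of `a i` over an index set `s`. -/
def chi (a : Fin 8 → (Fin n → ZMod 2)) (s : Finset (Fin 8)) : Fin n → ZMod 2 :=
  ∑ i ∈ s, a i

lemma add_self' (x : Fin n → ZMod 2) : x + x = 0 := by
  funext i; exact CharTwo.add_self_eq_zero (x i)

lemma symmDiff_eq_union (s t : Finset (Fin 8)) : symmDiff s t = (s \ t) ∪ (t \ s) := by
  rw [symmDiff_def]; rfl

lemma chi_symmDiff (a : Fin 8 → (Fin n → ZMod 2)) (s t : Finset (Fin 8)) :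
    chi a (symmDiff s t) = chi a s + chi a t := by
  unfold chi
  rw [symmDiff_eq_union, Finset.sum_union disjoint_sdiff_sdiff]
  have hs : ∑ i ∈ s, a i = ∑ i ∈ s \ t, a i + ∑ i ∈ s ∩ t, a i := by
    rw [← Finset.sum_union (Finset.disjoint_sdiff_inter s t), Finset.sdiff_union_inter]
  have ht : ∑ i ∈ t, a i = ∑ i ∈ t \ s, a i + ∑ i ∈ t ∩ s, a i := by
    rw [← Finset.sum_union (Finset.disjoint_sdiff_inter t s), Finset.sdiff_union_inter]
  rw [hs, ht, Finset.inter_comm t s]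
  linear_combination -add_self' (∑ i ∈ s ∩ t, a i)

lemma card_symmDiff_mod (s t : Finset (Fin 8)) :
    (symmDiff s t).card % 2 = (s.card + t.card) % 2 := by
  rw [symmDiff_eq_union, Finset.card_union_of_disjoint disjoint_sdiff_sdiff]
  have h1 := Finset.card_sdiff_add_card_inter s t
  have h2 := Finset.card_sdiff_add_card_inter t s
  rw [Finset.inter_comm t s] at h2
  omega

lemma indep_empty (a : Fin 8 → (Fin n → ZMod 2)) (ha : Function.Injective a)
    (hB : AffIndep (Finset.image a Finset.univ)) (u : Finset (Fin 8))
    (hu : u.card % 2 = 0) (h0 : chi a u = 0) : u = ∅ := by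
  by_contra hne
  obtain ⟨i, hi⟩ := Finset.nonempty_iff_ne_empty.mpr hne
  set T : Finset (Fin n → ZMod 2) := (u.erase i).image a with hT
  have hsub : T ⊆ (Finset.image a Finset.univ).erase (a i) := by
    intro x hx
    simp only [hT, Finset.mem_image, Finset.mem_erase] at hx ⊢
    obtain ⟨j, hj, rfl⟩ := hx
    exact ⟨fun h => hj.1 (ha h), j, Finset.mem_univ j, rfl⟩
  have hcard : T.card = u.card - 1 := by
    rw [hT, Finset.card_image_of_injective _ ha, Finset.card_erase_of_mem hi]
  have hodd : Odd T.card := by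
    rw [hcard]
    have h1 : 1 ≤ u.card := Finset.card_pos.mpr ⟨i, hi⟩
    exact Nat.Even.sub_odd h1 (Nat.even_iff.mpr hu) odd_one
  have hsum : ∑ v ∈ T, v = a i := by
    rw [hT, Finset.sum_image (fun x _ y _ h => ha h)]
    have := Finset.add_sum_erase u a hi
    unfold chi at h0
    rw [h0] at this
    linear_combination this - add_self' (a i)
  exact hB (a i) (Finset.mem_image_of_mem a (Finset.mem_univ i)) T hsub hodd hsum.symm

lemma chi_inj (a : Fin 8 → (Fin n → ZMod 2)) (ha : Function.Injective a)
    (hB : AffIndep (Finset.image a Finset.univ)) (s t : Finset (Fin 8))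
    (hp : (s.card + t.card) % 2 = 0) (h : chi a s = chi a t) : s = t := by
  have h0 : chi a (symmDiff s t) = 0 := by
    rw [chi_symmDiff, h]; exact add_self' _
  have hc : (symmDiff s t).card % 2 = 0 := by rw [card_symmDiff_mod]; exact hp
  have := indep_empty a ha hB _ hc h0
  rwa [← Finset.bot_eq_empty, symmDiff_eq_bot] at this

/-- The ten index sets for the second cap. -/
def LL : List (Finset (Fin 8)) :=
  [{0}, {1}, {2}, {3}, {4}, {5}, {6}, {7}, {0,1,2,3,4}, {2,3,4,5,6}]

set_option maxRecDepth 10000 in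
lemma LL_odd : ∀ s ∈ LL, s.card % 2 = 1 := by decide

set_option maxRecDepth 10000 in
lemma LL_no_pair : ∀ s ∈ LL, ∀ t ∈ LL,
    symmDiff s t ≠ ({2,3,4,7} : Finset (Fin 8)) ∨ s = t := by decide

theorem caps10_not_equivalent {n : ℕ} (a : Fin 8 → (Fin n → ZMod 2))
    (ha : Function.Injective a)
    (hB : AffIndep (Finset.image a Finset.univ)) :
    ¬ AffEquiv
      ((↑(Finset.image a Finset.univ) ∪
        {a 0 + a 1 + a 2 + a 3 + a 4, a 3 + a 4 + a 5 + a 6 + a 7}) :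
          Set (Fin n → ZMod 2))
      ((↑(Finset.image a Finset.univ) ∪
        {a 0 + a 1 + a 2 + a 3 + a 4, a 2 + a 3 + a 4 + a 5 + a 6}) :
          Set (Fin n → ZMod 2)) := by
  rintro ⟨L, b, hLb⟩
  set f : (Fin n → ZMod 2) → (Fin n → ZMod 2) := fun x => L x + b with hfdef
  have hfinj : Function.Injective f := by
    intro x y h
    simp only [hfdef, add_left_inj] at h
    exact L.injective h
  have hchiinj := chi_inj a ha hB
  -- explicit sums as chi
  have hP : a 0 + a 1 + a 2 + a 3 + a 4 = chi a {0,1,2,3,4} := by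
    unfold chi
    rw [show ({0,1,2,3,4} : Finset (Fin 8)) =
      insert 0 (insert 1 (insert 2 (insert 3 {4}))) from rfl]
    rw [Finset.sum_insert (by decide : (0 : Fin 8) ∉ ({1,2,3,4} : Finset (Fin 8))), Finset.sum_insert (by decide : (1 : Fin 8) ∉ ({2,3,4} : Finset (Fin 8))),
      Finset.sum_insert (by decide : (2 : Fin 8) ∉ ({3,4} : Finset (Fin 8))), Finset.sum_insert (by decide : (3 : Fin 8) ∉ ({4} : Finset (Fin 8))), Finset.sum_singleton]
    ring
  have hQ : a 3 + a 4 + a 5 + a 6 + a 7 = chi a {3,4,5,6,7} := by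
    unfold chi
    rw [show ({3,4,5,6,7} : Finset (Fin 8)) =
      insert 3 (insert 4 (insert 5 (insert 6 {7}))) from rfl]
    rw [Finset.sum_insert (by decide : (3 : Fin 8) ∉ ({4,5,6,7} : Finset (Fin 8))), Finset.sum_insert (by decide : (4 : Fin 8) ∉ ({5,6,7} : Finset (Fin 8))),
      Finset.sum_insert (by decide : (5 : Fin 8) ∉ ({6,7} : Finset (Fin 8))), Finset.sum_insert (by decide : (6 : Fin 8) ∉ ({7} : Finset (Fin 8))), Finset.sum_singleton]
    ring
  have hQ' : a 2 + a 3 + a 4 + a 5 + a 6 = chi a {2,3,4,5,6} := by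
    unfold chi
    rw [show ({2,3,4,5,6} : Finset (Fin 8)) =
      insert 2 (insert 3 (insert 4 (insert 5 {6}))) from rfl]
    rw [Finset.sum_insert (by decide : (2 : Fin 8) ∉ ({3,4,5,6} : Finset (Fin 8))), Finset.sum_insert (by decide : (3 : Fin 8) ∉ ({4,5,6} : Finset (Fin 8))),
      Finset.sum_insert (by decide : (4 : Fin 8) ∉ ({5,6} : Finset (Fin 8))), Finset.sum_insert (by decide : (5 : Fin 8) ∉ ({6} : Finset (Fin 8))), Finset.sum_singleton]
    ring
  have hai : ∀ i : Fin 8, a i = chi a {i} := by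
    intro i; unfold chi; rw [Finset.sum_singleton]
  -- the caps as finsets
  set D : Finset (Fin n → ZMod 2) :=
    (Finset.image a Finset.univ) ∪ {chi a {0,1,2,3,4}, chi a {3,4,5,6,7}} with hDdef
  set D' : Finset (Fin n → ZMod 2) :=
    (Finset.image a Finset.univ) ∪ {chi a {0,1,2,3,4}, chi a {2,3,4,5,6}} with hD'def
  -- non-membership facts
  have hnotmem : ∀ s : Finset (Fin 8), s.card = 5 → chi a s ∉ Finset.image a Finset.univ := by
    intro s hs hmem
    obtain ⟨i, -, hi⟩ := Finset.mem_image.mp hmem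
    have : ({i} : Finset (Fin 8)) = s := by
      apply hchiinj _ _ (by rw [Finset.card_singleton, hs]) (by rw [← hai, hi])
    have := congrArg Finset.card this
    rw [Finset.card_singleton, hs] at this
    exact absurd this (by norm_num)
  have hPQ : chi a ({0,1,2,3,4} : Finset (Fin 8)) ≠ chi a {3,4,5,6,7} := by
    intro h
    have := hchiinj _ _ (by decide) h
    exact absurd this (by decide)
  have hPQ' : chi a ({0,1,2,3,4} : Finset (Fin 8)) ≠ chi a {2,3,4,5,6} := by
    intro h
    have := hchiinj _ _ (by decide) h
    exact absurd this (by decide)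
  have hdisj : Disjoint (Finset.image a Finset.univ)
      ({chi a {0,1,2,3,4}, chi a {3,4,5,6,7}} : Finset (Fin n → ZMod 2)) := by
    rw [Finset.disjoint_insert_right, Finset.disjoint_singleton_right]
    exact ⟨hnotmem _ (by decide), hnotmem _ (by decide)⟩
  have hdisj' : Disjoint (Finset.image a Finset.univ)
      ({chi a {0,1,2,3,4}, chi a {2,3,4,5,6}} : Finset (Fin n → ZMod 2)) := by
    rw [Finset.disjoint_insert_right, Finset.disjoint_singleton_right]
    exact ⟨hnotmem _ (by decide), hnotmem _ (by decide)⟩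
  -- image finset equation
  have himg : Finset.image f D = D' := by
    apply Finset.coe_injective
    rw [Finset.coe_image]
    have hC : (D : Set (Fin n → ZMod 2)) =
        (↑(Finset.image a Finset.univ) ∪
          {a 0 + a 1 + a 2 + a 3 + a 4, a 3 + a 4 + a 5 + a 6 + a 7}) := by
      rw [hDdef, hP, hQ]
      simp [Set.insert_comm]
    have hC' : (D' : Set (Fin n → ZMod 2)) =
        (↑(Finset.image a Finset.univ) ∪
          {a 0 + a 1 + a 2 + a 3 + a 4, a 2 + a 3 + a 4 + a 5 + a 6}) := by
      rw [hD'def, hP, hQ']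
      simp [Set.insert_comm]
    rw [hC, hC', hLb]
  -- sums of the caps
  have hsumD : ∑ x ∈ D, x = chi a {3,4} := by
    rw [hDdef, Finset.sum_union hdisj, Finset.sum_pair hPQ,
      Finset.sum_image (fun x _ y _ h => ha h)]
    have huniv : ∑ i ∈ Finset.univ, a i = chi a Finset.univ := rfl
    rw [huniv, ← chi_symmDiff, ← chi_symmDiff]
    congr 1
  have hsumD' : ∑ x ∈ D', x = chi a {2,3,4,7} := by
    rw [hD'def, Finset.sum_union hdisj', Finset.sum_pair hPQ',
      Finset.sum_image (fun x _ y _ h => ha h)]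
    have huniv : ∑ i ∈ Finset.univ, a i = chi a Finset.univ := rfl
    rw [huniv, ← chi_symmDiff, ← chi_symmDiff]
    congr 1
  -- card of D
  have hcardD : D.card = 10 := by
    rw [hDdef, Finset.card_union_of_disjoint hdisj,
      Finset.card_image_of_injective _ ha, Finset.card_univ,
      Finset.card_insert_of_notMem (by simpa using hPQ), Finset.card_singleton]
    simp
  -- sum over D' equals L of sum over D
  have hLsum : ∑ x ∈ D', x = L (∑ x ∈ D, x) := by
    rw [← himg, Finset.sum_image (fun x _ y _ h => hfinj h)]
    simp only [hfdef]
    rw [Finset.sum_add_distrib, Finset.sum_const, hcardD, map_sum]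
    have : (10 : ℕ) • b = 0 := by
      show (10 : ℕ) • b = 0
      rw [show (10 : ℕ) = 2 * 5 from rfl, mul_smul]
      simp [two_smul, add_self']
    rw [this, add_zero]
  -- the two image points
  have hmem3 : f (a 3) ∈ D' := by
    rw [← himg]
    exact Finset.mem_image_of_mem f (Finset.mem_union_left _
      (Finset.mem_image_of_mem a (Finset.mem_univ 3)))
  have hmem4 : f (a 4) ∈ D' := by
    rw [← himg]
    exact Finset.mem_image_of_mem f (Finset.mem_union_left _
      (Finset.mem_image_of_mem a (Finset.mem_univ 4)))
  have hne34 : f (a 3) ≠ f (a 4) := fun h => absurd (ha (hfinj h)) (by decide)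
  have hkey : f (a 3) + f (a 4) = chi a {2,3,4,7} := by
    have h1 : f (a 3) + f (a 4) = L (a 3 + a 4) := by
      simp only [hfdef, map_add]
      linear_combination add_self' b
    have h2 : a 3 + a 4 = ∑ x ∈ D, x := by
      rw [hsumD, hai 3, hai 4, ← chi_symmDiff]
      congr 1
    rw [h1, h2, ← hLsum, hsumD']
  -- express elements of D' as chi of sets in LL
  have hform : ∀ x ∈ D', ∃ s ∈ LL, x = chi a s := by
    intro x hx
    rw [hD'def] at hx
    rcases Finset.mem_union.mp hx with h | h
    · obtain ⟨i, -, rfl⟩ := Finset.mem_image.mp h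
      have hiLL : ∀ j : Fin 8, ({j} : Finset (Fin 8)) ∈ LL := by decide
      exact ⟨{i}, hiLL i, hai i⟩
    · rcases Finset.mem_insert.mp h with h | h
      · exact ⟨{0,1,2,3,4}, by decide, h⟩
      · exact ⟨{2,3,4,5,6}, by decide, Finset.mem_singleton.mp h⟩
  obtain ⟨s, hsL, hs⟩ := hform _ hmem3
  obtain ⟨t, htL, ht⟩ := hform _ hmem4
  have hst : s ≠ t := by
    rintro rfl
    exact hne34 (hs.trans ht.symm)
  have hchi : chi a (symmDiff s t) = chi a {2,3,4,7} := by
    rw [chi_symmDiff, ← hs, ← ht, hkey]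
  have hpar : ((symmDiff s t).card + ({2,3,4,7} : Finset (Fin 8)).card) % 2 = 0 := by
    have hc := card_symmDiff_mod s t
    have h1 := LL_odd s hsL
    have h2 := LL_odd t htL
    have h3 : ({2,3,4,7} : Finset (Fin 8)).card = 4 := by decide
    omega
  have heq : symmDiff s t = ({2,3,4,7} : Finset (Fin 8)) := hchiinj _ _ hpar hchi
  rcases LL_no_pair s hsL t htL with h | h
  · exact h heq
  · exact hst h
end

section
/- Let C be a cap in (Z/2Z)^n with affinely independent subset B of size 8 and three distinct dependent elements x₁, x₂, x₃ ∈ C \ B, with x_i = Σ B_i for subsets B_i ⊆ B. Then |B₁ ∪ B₂ ∪ B₃| = 8, i.e., the union of the three supports is all of B. -/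
open Finset symmDiff

variable {α : Type*} [DecidableEq α]

lemma card_symmDiff_aux (s t : Finset α) :
    (s ∆ t).card + 2 * (s ∩ t).card = s.card + t.card := by
  have h1 : s ∆ t = (s ∪ t) \ (s ∩ t) := symmDiff_eq_sup_sdiff_inf s t
  have h2 := Finset.card_union_add_card_inter s t
  have h3 : ((s ∪ t) \ (s ∩ t)).card = (s ∪ t).card - (s ∩ t).card :=
    Finset.card_sdiff_of_subset (Finset.inter_subset_union)
  have h4 : (s ∩ t).card ≤ (s ∪ t).card := Finset.card_le_card Finset.inter_subset_union
  rw [h1, h3]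
  omega

lemma inter_symmDiff (s t u : Finset α) : (u ∩ s) ∆ (u ∩ t) = u ∩ (s ∆ t) := by
  ext x
  simp only [Finset.mem_symmDiff, Finset.mem_inter]
  tauto

lemma inter_inter (s t u : Finset α) : (u ∩ s) ∩ (u ∩ t) = u ∩ s ∩ t := by
  ext x
  simp only [Finset.mem_inter]
  tauto

lemma key_s10 (A B C : Finset α)
    (hA : A.card = 5 ∨ A.card = 7) (hB : B.card = 5 ∨ B.card = 7)
    (hCc : C.card = 5 ∨ C.card = 7)
    (dAB0 : (A ∆ B).card ≠ 0) (dAB2 : (A ∆ B).card ≠ 2)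
    (dAC0 : (A ∆ C).card ≠ 0) (dAC2 : (A ∆ C).card ≠ 2)
    (dBC0 : (B ∆ C).card ≠ 0) (dBC2 : (B ∆ C).card ≠ 2)
    (hT : ((A ∆ B) ∆ C).card ≠ 1)
    (hU : (A ∪ B ∪ C).card ≤ 7) : False := by
  have hAU : A ⊆ A ∪ B ∪ C := (Finset.subset_union_left).trans Finset.subset_union_left
  have hBU : B ⊆ A ∪ B ∪ C := (Finset.subset_union_right).trans Finset.subset_union_left
  have hCU : C ⊆ A ∪ B ∪ C := Finset.subset_union_right
  -- rule out any card 7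
  have h7 : ∀ X Y : Finset α, X ⊆ A ∪ B ∪ C → Y ⊆ A ∪ B ∪ C → X.card = 7 →
      Y.card = 5 ∨ Y.card = 7 → (X ∆ Y).card ≠ 0 → (X ∆ Y).card ≠ 2 → False := by
    intro X Y hX hY hX7 hY' hd0 hd2
    have hXU : A ∪ B ∪ C = X := (Finset.eq_of_subset_of_card_le hX (by omega)).symm
    have hYX : Y ⊆ X := hXU ▸ hY
    have hi : X ∩ Y = Y := Finset.inter_eq_right.mpr hYX
    have := card_symmDiff_aux X Y
    rw [hi] at this
    omega
  rcases hA with hA5 | hA7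
  · rcases hB with hB5 | hB7
    · rcases hCc with hC5 | hC7
      · -- all sizes 5
        have hm : ∀ X Y : Finset α, X ⊆ A ∪ B ∪ C → Y ⊆ A ∪ B ∪ C →
            X.card = 5 → Y.card = 5 → (X ∆ Y).card ≠ 0 → (X ∆ Y).card ≠ 2 →
            (X ∩ Y).card = 3 ∧ (X ∆ Y).card = 4 ∧ (X ∪ Y).card = 7 := by
          intro X Y hX hY hX5 hY5 hd0 hd2
          have h1 := card_symmDiff_aux X Y
          have h2 := Finset.card_union_add_card_inter X Y
          have h3 : (X ∪ Y).card ≤ 7 :=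
            le_trans (Finset.card_le_card (Finset.union_subset hX hY)) hU
          omega
        obtain ⟨mAB, dAB, uAB⟩ := hm A B hAU hBU hA5 hB5 dAB0 dAB2
        obtain ⟨mAC, dAC, uAC⟩ := hm A C hAU hCU hA5 hC5 dAC0 dAC2
        obtain ⟨mBC, dBC, uBC⟩ := hm B C hBU hCU hB5 hC5 dBC0 dBC2
        -- C ⊆ A ∪ B
        have hABU : A ∪ B ⊆ A ∪ B ∪ C := Finset.subset_union_left
        have hUAB : A ∪ B ∪ C = A ∪ B := (Finset.eq_of_subset_of_card_le hABU (by omega)).symm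
        have hCAB : C ⊆ A ∪ B := hUAB ▸ hCU
        have hCeq : C ∩ (A ∪ B) = C := Finset.inter_eq_left.mpr hCAB
        have h5 := Finset.card_union_add_card_inter (C ∩ A) (C ∩ B)
        rw [← Finset.inter_union_distrib_left, hCeq, inter_inter] at h5
        have hCA : (C ∩ A).card = 3 := by rw [Finset.inter_comm]; exact mAC
        have hCB : (C ∩ B).card = 3 := by rw [Finset.inter_comm]; exact mBC
        have h6 := card_symmDiff_aux (C ∩ A) (C ∩ B)
        rw [inter_symmDiff, inter_inter] at h6
        have h7' := card_symmDiff_aux (A ∆ B) C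
        have h8 : ((A ∆ B) ∩ C).card = (C ∩ (A ∆ B)).card := by rw [Finset.inter_comm]
        omega
      · exact h7 C A hCU hAU hC7 (Or.inl hA5) (by rwa [symmDiff_comm]) (by rwa [symmDiff_comm])
    · exact h7 B A hBU hAU hB7 (Or.inl hA5) (by rwa [symmDiff_comm]) (by rwa [symmDiff_comm])
  · exact h7 A B hAU hBU hA7 hB dAB0 dAB2

-- char two facts
lemma addself {n : ℕ} (v : Fin n → ZMod 2) : v + v = 0 := by
  funext i
  exact CharTwo.add_self_eq_zero (v i)

lemma eq_of_add_eq_zero' {n : ℕ} (a b : Fin n → ZMod 2) (h : a + b = 0) : a = b := by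
  have : a + (b + b) = a := by rw [addself]; abel
  calc a = a + b + b := by rw [add_assoc, addself b]; abel
  _ = b := by rw [h]; abel

lemma sum_symmDiff' {n : ℕ} (s t : Finset (Fin n → ZMod 2)) :
    ∑ v ∈ s ∆ t, v = (∑ v ∈ s, v) + ∑ v ∈ t, v := by
  have h1 : s ∆ t = (s ∪ t) \ (s ∩ t) := symmDiff_eq_sup_sdiff_inf s t
  have h2 : ∑ v ∈ (s ∪ t) \ (s ∩ t), v + ∑ v ∈ s ∩ t, v = ∑ v ∈ s ∪ t, v :=
    Finset.sum_sdiff Finset.inter_subset_union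
  have h3 : (∑ v ∈ s ∪ t, v) + ∑ v ∈ s ∩ t, v = (∑ v ∈ s, v) + ∑ v ∈ t, v :=
    Finset.sum_union_inter
  have h4 := addself (∑ v ∈ s ∩ t, v)
  rw [h1]
  calc ∑ v ∈ (s ∪ t) \ (s ∩ t), v
      = ∑ v ∈ (s ∪ t) \ (s ∩ t), v + (∑ v ∈ s ∩ t, v + ∑ v ∈ s ∩ t, v) := by rw [h4]; abel
    _ = (∑ v ∈ s ∪ t, v) + ∑ v ∈ s ∩ t, v := by rw [← add_assoc, h2]
    _ = (∑ v ∈ s, v) + ∑ v ∈ t, v := h3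

theorem three_supports_cover {n : ℕ} (C : Set (Fin n → ZMod 2))
    (hC : IsCap C) (B B₁ B₂ B₃ : Finset (Fin n → ZMod 2)) (hBC : ↑B ⊆ C)
    (hB : AffIndep B) (hBcard : B.card = 8)
    (x₁ x₂ x₃ : Fin n → ZMod 2)
    (hx₁C : x₁ ∈ C) (hx₁B : x₁ ∉ B)
    (hx₂C : x₂ ∈ C) (hx₂B : x₂ ∉ B)
    (hx₃C : x₃ ∈ C) (hx₃B : x₃ ∉ B)
    (h12 : x₁ ≠ x₂) (h13 : x₁ ≠ x₃) (h23 : x₂ ≠ x₃)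
    (hs₁ : B₁ ⊆ B) (hs₂ : B₂ ⊆ B) (hs₃ : B₃ ⊆ B)
    (ho₁ : Odd B₁.card) (ho₂ : Odd B₂.card) (ho₃ : Odd B₃.card)
    (he₁ : x₁ = ∑ v ∈ B₁, v) (he₂ : x₂ = ∑ v ∈ B₂, v) (he₃ : x₃ = ∑ v ∈ B₃, v) :
    (B₁ ∪ B₂ ∪ B₃).card = 8 := by
  classical
  -- size of each Bᵢ is 5 or 7
  have hsize : ∀ (x : Fin n → ZMod 2) (S : Finset (Fin n → ZMod 2)),
      x ∈ C → x ∉ B → S ⊆ B → Odd S.card → x = ∑ v ∈ S, v →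
      S.card = 5 ∨ S.card = 7 := by
    intro x S hxC hxB hS hodd he
    have hle : S.card ≤ 8 := hBcard ▸ Finset.card_le_card hS
    have h1 : S.card ≠ 1 := by
      intro h
      obtain ⟨a, ha⟩ := Finset.card_eq_one.mp h
      subst ha
      simp at he
      exact hxB (he ▸ hS (Finset.mem_singleton_self a))
    have h3 : S.card ≠ 3 := by
      intro h
      obtain ⟨a, b, c, hab, hac, hbc, hS3⟩ := Finset.card_eq_three.mp h
      have hsum : ∑ v ∈ S, v = a + b + c := by
        subst hS3
        rw [Finset.sum_insert (by simp [hab, hac]), Finset.sum_insert (by simp [hbc]),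
          Finset.sum_singleton]
        abel
      have haB : a ∈ B := hS (by rw [hS3]; simp)
      have hbB : b ∈ B := hS (by rw [hS3]; simp)
      have hcB : c ∈ B := hS (by rw [hS3]; simp)
      refine hC a (hBC haB) b (hBC hbB) c (hBC hcB) x hxC hab hac
        (fun h' => hxB (h' ▸ haB)) hbc (fun h' => hxB (h' ▸ hbB))
        (fun h' => hxB (h' ▸ hcB)) ?_
      have : x + x = 0 := addself x
      rw [he, hsum] at this ⊢
      calc a + b + c + (a + b + c) = (a+b+c) + (a+b+c) := by abel
        _ = 0 := this
    obtain ⟨k, hk⟩ := hodd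
    omega
  have hc₁ := hsize x₁ B₁ hx₁C hx₁B hs₁ ho₁ he₁
  have hc₂ := hsize x₂ B₂ hx₂C hx₂B hs₂ ho₂ he₂
  have hc₃ := hsize x₃ B₃ hx₃C hx₃B hs₃ ho₃ he₃
  -- pairwise symmetric difference ≠ 0, ≠ 2
  have hpair : ∀ (x y : Fin n → ZMod 2) (S T : Finset (Fin n → ZMod 2)),
      x ∈ C → x ∉ B → y ∈ C → y ∉ B → x ≠ y → S ⊆ B → T ⊆ B →
      x = ∑ v ∈ S, v → y = ∑ v ∈ T, v →
      (S ∆ T).card ≠ 0 ∧ (S ∆ T).card ≠ 2 := by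
    intro x y S T hxC hxB hyC hyB hxy hS hT hex hey
    have hsum : ∑ v ∈ S ∆ T, v = x + y := by rw [sum_symmDiff', hex, hey]
    have hsub : S ∆ T ⊆ B := (symmDiff_le_sup).trans (Finset.union_subset hS hT)
    constructor
    · intro h
      rw [Finset.card_eq_zero.mp h] at hsum
      simp at hsum
      exact hxy (eq_of_add_eq_zero' x y hsum.symm)
    · intro h
      obtain ⟨a, b, hab, hST⟩ := Finset.card_eq_two.mp h
      have haB : a ∈ B := hsub (by rw [hST]; simp)
      have hbB : b ∈ B := hsub (by rw [hST]; simp)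
      rw [hST, Finset.sum_insert (by simp [hab]), Finset.sum_singleton] at hsum
      refine hC x hxC y hyC a (hBC haB) b (hBC hbB) hxy
        (fun h' => hxB (h' ▸ haB)) (fun h' => hxB (h' ▸ hbB))
        (fun h' => hyB (h' ▸ haB)) (fun h' => hyB (h' ▸ hbB)) hab ?_
      calc x + y + a + b = (x + y) + (a + b) := by abel
        _ = (a + b) + (a + b) := by rw [← hsum]
        _ = 0 := addself _
  obtain ⟨d120, d122⟩ := hpair x₁ x₂ B₁ B₂ hx₁C hx₁B hx₂C hx₂B h12 hs₁ hs₂ he₁ he₂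
  obtain ⟨d130, d132⟩ := hpair x₁ x₃ B₁ B₃ hx₁C hx₁B hx₃C hx₃B h13 hs₁ hs₃ he₁ he₃
  obtain ⟨d230, d232⟩ := hpair x₂ x₃ B₂ B₃ hx₂C hx₂B hx₃C hx₃B h23 hs₂ hs₃ he₂ he₃
  -- triple symmetric difference card ≠ 1
  have hT : ((B₁ ∆ B₂) ∆ B₃).card ≠ 1 := by
    intro h
    obtain ⟨b, hb⟩ := Finset.card_eq_one.mp h
    have hsum : ∑ v ∈ (B₁ ∆ B₂) ∆ B₃, v = x₁ + x₂ + x₃ := by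
      rw [sum_symmDiff', sum_symmDiff', he₁, he₂, he₃]
    rw [hb, Finset.sum_singleton] at hsum
    have hbB : b ∈ B := by
      have : b ∈ (B₁ ∆ B₂) ∆ B₃ := hb ▸ Finset.mem_singleton_self b
      have hs12 : (B₁ ∆ B₂) ∆ B₃ ⊆ (B₁ ∆ B₂) ∪ B₃ := symmDiff_le_sup
      have hs12' : B₁ ∆ B₂ ⊆ B₁ ∪ B₂ := symmDiff_le_sup
      have h2 := hs12 this
      rcases Finset.mem_union.mp h2 with h3 | h3
      · have h4 := hs12' h3
        rcases Finset.mem_union.mp h4 with h5 | h5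
        · exact hs₁ h5
        · exact hs₂ h5
      · exact hs₃ h3
    refine hC x₁ hx₁C x₂ hx₂C x₃ hx₃C b (hBC hbB) h12 h13
      (fun h' => hx₁B (h' ▸ hbB)) h23 (fun h' => hx₂B (h' ▸ hbB))
      (fun h' => hx₃B (h' ▸ hbB)) ?_
    calc x₁ + x₂ + x₃ + b = b + b := by rw [← hsum]
      _ = 0 := addself b
  -- finish
  have hle : (B₁ ∪ B₂ ∪ B₃).card ≤ 8 :=
    hBcard ▸ Finset.card_le_card (Finset.union_subset (Finset.union_subset hs₁ hs₂) hs₃)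
  by_contra hne
  exact key_s10 B₁ B₂ B₃ hc₁ hc₂ hc₃ d120 d122 d130 d132 d230 d232 hT (by omega)
end

section
/- Let B = {a₁, ..., a₈} be affinely independent in (Z/2Z)^n and let x₁ = a₁+a₂+a₃+a₄+a₅, x₂ = a₃+a₄+a₅+a₆+a₇, x₃ = a₁+a₃+a₄+a₆+a₈. Then C = B ∪ {x₁, x₂, x₃} is a cap of size 11. -/
lemma sum_ne_zero_of_affIndep {n : ℕ} (a : Fin 8 → (Fin n → ZMod 2))
    (ha : Function.Injective a) (hB : AffIndep (Finset.image a Finset.univ))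
    (S : Finset (Fin 8)) (hS : S.Nonempty) (hev : Even S.card) :
    ∑ i ∈ S, a i ≠ 0 := by
  obtain ⟨j, hj⟩ := hS
  intro h0
  have hce : (S.erase j).card = S.card - 1 := Finset.card_erase_of_mem hj
  have hpos : 0 < S.card := Finset.card_pos.2 ⟨j, hj⟩
  have hodd : Odd ((S.erase j).image a).card := by
    rw [Finset.card_image_of_injective _ ha, hce]
    rcases hev with ⟨k, hk⟩
    exact ⟨k - 1, by omega⟩
  have hsub : (S.erase j).image a ⊆ (Finset.image a Finset.univ).erase (a j) := by
    intro v hv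
    obtain ⟨i, hi, rfl⟩ := Finset.mem_image.mp hv
    obtain ⟨hij, _⟩ := Finset.mem_erase.mp hi
    exact Finset.mem_erase.mpr ⟨fun h => hij (ha h),
      Finset.mem_image.mpr ⟨i, Finset.mem_univ i, rfl⟩⟩
  have hne := hB (a j) (Finset.mem_image.mpr ⟨j, Finset.mem_univ j, rfl⟩)
    ((S.erase j).image a) hsub hodd
  apply hne
  rw [Finset.sum_image (fun i _ k _ h => ha h)]
  have hsum : a j + ∑ i ∈ S.erase j, a i = 0 := by
    rwa [Finset.add_sum_erase _ _ hj]
  funext x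
  have h2 : ∀ u v : ZMod 2, u + v = 0 → u = v := by decide
  exact h2 _ _ (by simpa using congrFun hsum x)

/-- The 11 indicator vectors of the cap. -/
def capV : Fin 11 → Fin 8 → ZMod 2 :=
  ![![1,0,0,0,0,0,0,0], ![0,1,0,0,0,0,0,0], ![0,0,1,0,0,0,0,0], ![0,0,0,1,0,0,0,0],
    ![0,0,0,0,1,0,0,0], ![0,0,0,0,0,1,0,0], ![0,0,0,0,0,0,1,0], ![0,0,0,0,0,0,0,1],
    ![1,1,1,1,1,0,0,0], ![0,0,1,1,1,1,1,0], ![1,0,1,1,0,1,0,1]]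

lemma capV_par : ∀ i, (∑ j, capV i j) = 1 := by decide

lemma capV_inj : ∀ i j : Fin 11, i ≠ j → capV i ≠ capV j := by decide

set_option maxHeartbeats 4000000 in
lemma capV_quad : ∀ i j k l : Fin 11, capV i ≠ capV j → capV i ≠ capV k →
    capV i ≠ capV l → capV j ≠ capV k → capV j ≠ capV l → capV k ≠ capV l →
    capV i + capV j + capV k + capV l ≠ 0 := by decide

set_option maxHeartbeats 1000000 in
theorem cap11_555_333 {n : ℕ} (a : Fin 8 → (Fin n → ZMod 2))
    (ha : Function.Injective a)
    (hB : AffIndep (Finset.image a Finset.univ)) :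
    IsCap (↑(Finset.image a Finset.univ ∪
        {a 0 + a 1 + a 2 + a 3 + a 4,
         a 2 + a 3 + a 4 + a 5 + a 6,
         a 0 + a 2 + a 3 + a 5 + a 7}) : Set (Fin n → ZMod 2)) ∧
    (Finset.image a Finset.univ ∪
        {a 0 + a 1 + a 2 + a 3 + a 4,
         a 2 + a 3 + a 4 + a 5 + a 6,
         a 0 + a 2 + a 3 + a 5 + a 7}).card = 11 := by
  classical
  set f : (Fin 8 → ZMod 2) → (Fin n → ZMod 2) := fun c => ∑ i, c i • a i with hf
  have hfadd : ∀ c d, f (c + d) = f c + f d := by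
    intro c d
    simp [hf, add_smul, Finset.sum_add_distrib]
  have h2 : ∀ u v : ZMod 2, u + v = 0 → u = v := by decide
  have hadd0 : ∀ u v : Fin 8 → ZMod 2, u + v = 0 → u = v := by
    intro u v h
    funext x
    exact h2 _ _ (by simpa using congrFun h x)
  have hself : ∀ u : Fin n → ZMod 2, u + u = 0 := by
    intro u
    funext x
    have : ∀ z : ZMod 2, z + z = 0 := by decide
    simpa using this (u x)
  have key : ∀ c : Fin 8 → ZMod 2, c ≠ 0 → (∑ i, c i) = 0 → f c ≠ 0 := by
    intro c hc hpar
    have h01 : ∀ x : ZMod 2, x = 0 ∨ x = 1 := by decide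
    set S : Finset (Fin 8) := Finset.univ.filter (fun i => c i = 1) with hSdef
    have hfc : f c = ∑ i ∈ S, a i := by
      show (∑ i, c i • a i) = ∑ i ∈ S, a i
      rw [← Finset.sum_filter_add_sum_filter_not Finset.univ (fun i => c i = 1)]
      have h1 : ∑ i ∈ Finset.univ.filter (fun i => c i = 1), c i • a i
          = ∑ i ∈ S, a i := by
        apply Finset.sum_congr rfl
        intro i hi
        rw [(Finset.mem_filter.mp hi).2, one_smul]
      have h2' : ∑ i ∈ Finset.univ.filter (fun i => ¬ c i = 1), c i • a i = 0 := by
        apply Finset.sum_eq_zero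
        intro i hi
        rcases h01 (c i) with h | h
        · rw [h, zero_smul]
        · exact absurd h (Finset.mem_filter.mp hi).2
      rw [h1, h2', add_zero]
    have hSne : S.Nonempty := by
      by_contra h
      apply hc
      funext i
      rcases h01 (c i) with h' | h'
      · exact h'
      · exact absurd ⟨i, Finset.mem_filter.mpr ⟨Finset.mem_univ i, h'⟩⟩ h
    have hcard : Even S.card := by
      have hsc : (∑ i, c i) = (S.card : ZMod 2) := by
        rw [← Finset.sum_filter_add_sum_filter_not Finset.univ (fun i => c i = 1)]
        have h1 : ∑ i ∈ Finset.univ.filter (fun i => c i = 1), c i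
            = (S.card : ZMod 2) := by
          rw [Finset.sum_congr rfl (fun i hi => (Finset.mem_filter.mp hi).2)]
          simp
          rfl
        have h2' : ∑ i ∈ Finset.univ.filter (fun i => ¬ c i = 1), c i = 0 := by
          apply Finset.sum_eq_zero
          intro i hi
          rcases h01 (c i) with h' | h'
          · exact h'
          · exact absurd h' (Finset.mem_filter.mp hi).2
        rw [h1, h2', add_zero]
      rw [hsc] at hpar
      exact even_iff_two_dvd.mpr ((ZMod.natCast_eq_zero_iff S.card 2).mp hpar)
    rw [hfc]
    exact sum_ne_zero_of_affIndep a ha hB S hSne hcard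
  -- explicit values of f on the 11 indicator vectors
  have hsingle : ∀ i : Fin 8,
      f (fun j => if j = i then (1 : ZMod 2) else 0) = a i := by
    intro i
    show (∑ j, (if j = i then (1 : ZMod 2) else 0) • a j) = a i
    simp [ite_smul, one_smul, zero_smul, Finset.sum_ite_eq']
  set E : Fin 8 → (Fin 8 → ZMod 2) := fun i j => if j = i then 1 else 0 with hE
  have hsE : ∀ i, f (E i) = a i := by
    intro i
    rw [hE]
    exact hsingle i
  have hv0 : f (capV 0) = a 0 := by
    rw [show capV 0 = E 0 from by rw [hE]; decide, hsE]
  have hv1 : f (capV 1) = a 1 := by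
    rw [show capV 1 = E 1 from by rw [hE]; decide, hsE]
  have hv2 : f (capV 2) = a 2 := by
    rw [show capV 2 = E 2 from by rw [hE]; decide, hsE]
  have hv3 : f (capV 3) = a 3 := by
    rw [show capV 3 = E 3 from by rw [hE]; decide, hsE]
  have hv4 : f (capV 4) = a 4 := by
    rw [show capV 4 = E 4 from by rw [hE]; decide, hsE]
  have hv5 : f (capV 5) = a 5 := by
    rw [show capV 5 = E 5 from by rw [hE]; decide, hsE]
  have hv6 : f (capV 6) = a 6 := by
    rw [show capV 6 = E 6 from by rw [hE]; decide, hsE]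
  have hv7 : f (capV 7) = a 7 := by
    rw [show capV 7 = E 7 from by rw [hE]; decide, hsE]
  have hv8 : f (capV 8) = a 0 + a 1 + a 2 + a 3 + a 4 := by
    rw [show capV 8 = E 0 + E 1 + E 2 + E 3 + E 4 from by rw [hE]; decide]
    rw [hfadd, hfadd, hfadd, hfadd, hsE, hsE, hsE, hsE, hsE]
  have hv9 : f (capV 9) = a 2 + a 3 + a 4 + a 5 + a 6 := by
    rw [show capV 9 = E 2 + E 3 + E 4 + E 5 + E 6 from by rw [hE]; decide]
    rw [hfadd, hfadd, hfadd, hfadd, hsE, hsE, hsE, hsE, hsE]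
  have hv10 : f (capV 10) = a 0 + a 2 + a 3 + a 5 + a 7 := by
    rw [show capV 10 = E 0 + E 2 + E 3 + E 5 + E 7 from by rw [hE]; decide]
    rw [hfadd, hfadd, hfadd, hfadd, hsE, hsE, hsE, hsE, hsE]
  -- injectivity of i ↦ f (capV i)
  have hfinj : Function.Injective (fun i => f (capV i)) := by
    intro i j hij
    by_contra hne
    have hVne : capV i ≠ capV j := capV_inj i j hne
    have hc0 : capV i + capV j ≠ 0 := fun h => hVne (hadd0 _ _ h)
    have hcpar : (∑ x, (capV i + capV j) x) = 0 := by
      simp only [Pi.add_apply, Finset.sum_add_distrib, capV_par]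
      decide
    apply key _ hc0 hcpar
    rw [hfadd]
    simp only at hij
    rw [hij]
    exact hself _
  -- the union equals the image of f ∘ capV
  have hCeq : Finset.image a Finset.univ ∪
      ({a 0 + a 1 + a 2 + a 3 + a 4,
        a 2 + a 3 + a 4 + a 5 + a 6,
        a 0 + a 2 + a 3 + a 5 + a 7} : Finset (Fin n → ZMod 2))
      = Finset.image (fun i => f (capV i)) Finset.univ := by
    apply Finset.Subset.antisymm
    · intro x hx
      rcases Finset.mem_union.mp hx with hx | hx
      · obtain ⟨i, -, rfl⟩ := Finset.mem_image.mp hx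
        have hcases : i = 0 ∨ i = 1 ∨ i = 2 ∨ i = 3 ∨ i = 4 ∨ i = 5 ∨ i = 6 ∨ i = 7 := by
          omega
        rcases hcases with rfl | rfl | rfl | rfl | rfl | rfl | rfl | rfl
        · exact Finset.mem_image.mpr ⟨0, Finset.mem_univ _, hv0⟩
        · exact Finset.mem_image.mpr ⟨1, Finset.mem_univ _, hv1⟩
        · exact Finset.mem_image.mpr ⟨2, Finset.mem_univ _, hv2⟩
        · exact Finset.mem_image.mpr ⟨3, Finset.mem_univ _, hv3⟩
        · exact Finset.mem_image.mpr ⟨4, Finset.mem_univ _, hv4⟩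
        · exact Finset.mem_image.mpr ⟨5, Finset.mem_univ _, hv5⟩
        · exact Finset.mem_image.mpr ⟨6, Finset.mem_univ _, hv6⟩
        · exact Finset.mem_image.mpr ⟨7, Finset.mem_univ _, hv7⟩
      · rcases Finset.mem_insert.mp hx with rfl | hx
        · exact Finset.mem_image.mpr ⟨8, Finset.mem_univ _, hv8⟩
        rcases Finset.mem_insert.mp hx with rfl | hx
        · exact Finset.mem_image.mpr ⟨9, Finset.mem_univ _, hv9⟩
        rcases Finset.mem_singleton.mp hx with rfl
        exact Finset.mem_image.mpr ⟨10, Finset.mem_univ _, hv10⟩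
    · intro x hx
      obtain ⟨i, -, rfl⟩ := Finset.mem_image.mp hx
      have hcases : i = 0 ∨ i = 1 ∨ i = 2 ∨ i = 3 ∨ i = 4 ∨ i = 5 ∨ i = 6 ∨ i = 7 ∨
          i = 8 ∨ i = 9 ∨ i = 10 := by omega
      rcases hcases with rfl | rfl | rfl | rfl | rfl | rfl | rfl | rfl | rfl | rfl | rfl
      · exact Finset.mem_union_left _ (by rw [hv0]; exact Finset.mem_image.mpr ⟨0, Finset.mem_univ _, rfl⟩)
      · exact Finset.mem_union_left _ (by rw [hv1]; exact Finset.mem_image.mpr ⟨1, Finset.mem_univ _, rfl⟩)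
      · exact Finset.mem_union_left _ (by rw [hv2]; exact Finset.mem_image.mpr ⟨2, Finset.mem_univ _, rfl⟩)
      · exact Finset.mem_union_left _ (by rw [hv3]; exact Finset.mem_image.mpr ⟨3, Finset.mem_univ _, rfl⟩)
      · exact Finset.mem_union_left _ (by rw [hv4]; exact Finset.mem_image.mpr ⟨4, Finset.mem_univ _, rfl⟩)
      · exact Finset.mem_union_left _ (by rw [hv5]; exact Finset.mem_image.mpr ⟨5, Finset.mem_univ _, rfl⟩)
      · exact Finset.mem_union_left _ (by rw [hv6]; exact Finset.mem_image.mpr ⟨6, Finset.mem_univ _, rfl⟩)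
      · exact Finset.mem_union_left _ (by rw [hv7]; exact Finset.mem_image.mpr ⟨7, Finset.mem_univ _, rfl⟩)
      · exact Finset.mem_union_right _ (by rw [hv8]; simp)
      · exact Finset.mem_union_right _ (by rw [hv9]; simp)
      · exact Finset.mem_union_right _ (by rw [hv10]; simp)
  constructor
  · intro p hp q hq r hr s hs hpq hpr hps hqr hqs hrs habs
    have hmem : ∀ x : Fin n → ZMod 2, x ∈ (↑(Finset.image a Finset.univ ∪
        ({a 0 + a 1 + a 2 + a 3 + a 4, a 2 + a 3 + a 4 + a 5 + a 6,
           a 0 + a 2 + a 3 + a 5 + a 7} : Finset (Fin n → ZMod 2))) :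
          Set (Fin n → ZMod 2)) → ∃ i : Fin 11, x = f (capV i) := by
      intro x hx
      have hx' : x ∈ Finset.image (fun i => f (capV i)) Finset.univ := by
        rw [← hCeq]
        exact_mod_cast hx
      obtain ⟨i, -, rfl⟩ := Finset.mem_image.mp hx'
      exact ⟨i, rfl⟩
    obtain ⟨i, rfl⟩ := hmem p hp
    obtain ⟨j, rfl⟩ := hmem q hq
    obtain ⟨k, rfl⟩ := hmem r hr
    obtain ⟨l, rfl⟩ := hmem s hs
    have hd : ∀ i' j' : Fin 11, f (capV i') ≠ f (capV j') → capV i' ≠ capV j' :=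
      fun i' j' h hh => h (by rw [hh])
    have hq0 := capV_quad i j k l (hd _ _ hpq) (hd _ _ hpr) (hd _ _ hps)
      (hd _ _ hqr) (hd _ _ hqs) (hd _ _ hrs)
    have hqpar : (∑ x, (capV i + capV j + capV k + capV l) x) = 0 := by
      simp only [Pi.add_apply, Finset.sum_add_distrib, capV_par]
      decide
    exact key _ hq0 hqpar (by rw [← habs, hfadd, hfadd, hfadd])
  · rw [hCeq, Finset.card_image_of_injective _ hfinj, Finset.card_univ, Fintype.card_fin]
end
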